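/- Let Y, X, Z be finite types, and let p, q be probability mass functions on Y × X × Z with all marginals and conditionals positive. Assume the CPS condition: for all x, y, z, p(x | y, z) = q(x | y, z) (conditional of X given Y, Z agrees). Then for every k ∈ Y and every (x, z), q(y = k | x, z) = p(y = k | x, z) · (q(y = k | z) / p(y = k | z)) / (∑_{l ∈ Y} p(y = l | x, z) · (q(y = l | z) / p(y = l | z))). -/

import Mathlib

open Finset

/-- **Posterior correction under Conditional Probability Shift (Theorem 1).**
For pmfs `p`, `q` on `Y × X × Z` (written as functions `Y → X → Z → ℝ`) that are
pointwise positive (so all marginals and conditionals are positive), if the CPS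
condition `p(x|y,z) = q(x|y,z)` holds, then
`q(y=k|x,z) = p(y=k|x,z)·(q(y=k|z)/p(y=k|z)) / ∑_l p(y=l|x,z)·(q(y=l|z)/p(y=l|z))`. -/
theorem cps_posterior_correction {Y X Z : Type*} [Fintype Y] [Fintype X] [Fintype Z]
    (p q : Y → X → Z → ℝ)
    (hp_pos : ∀ y x z, 0 < p y x z) (hq_pos : ∀ y x z, 0 < q y x z)
    (hp_sum : ∑ y, ∑ x, ∑ z, p y x z = 1) (hq_sum : ∑ y, ∑ x, ∑ z, q y x z = 1)
    (hCPS : ∀ x y z,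
      p y x z / (∑ x', p y x' z) = q y x z / (∑ x', q y x' z)) :
    ∀ (k : Y) (x : X) (z : Z),
      q k x z / (∑ l, q l x z) =
        (p k x z / (∑ l, p l x z)) *
            ((∑ x', q k x' z) / (∑ y', ∑ x', q y' x' z)
              / ((∑ x', p k x' z) / (∑ y', ∑ x', p y' x' z))) /
          ∑ l, (p l x z / (∑ l', p l' x z)) *
            ((∑ x', q l x' z) / (∑ y', ∑ x', q y' x' z)
              / ((∑ x', p l x' z) / (∑ y', ∑ x', p y' x' z))) := by
  intro k x z
  -- nonemptiness
  have hY : Nonempty Y := by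
    by_contra h
    rw [not_nonempty_iff] at h
    simp [Finset.univ_eq_empty] at hp_sum
  have hX : Nonempty X := by
    by_contra h
    rw [not_nonempty_iff] at h
    simp [Finset.univ_eq_empty] at hp_sum
  -- positivity of sums
  have hPx : 0 < ∑ l, p l x z := Finset.sum_pos (fun l _ => hp_pos l x z) univ_nonempty
  have hQx : 0 < ∑ l, q l x z := Finset.sum_pos (fun l _ => hq_pos l x z) univ_nonempty
  have hPy : ∀ l, 0 < ∑ x', p l x' z :=
    fun l => Finset.sum_pos (fun x' _ => hp_pos l x' z) univ_nonempty
  have hQy : ∀ l, 0 < ∑ x', q l x' z :=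
    fun l => Finset.sum_pos (fun x' _ => hq_pos l x' z) univ_nonempty
  have hPZ : 0 < ∑ y', ∑ x', p y' x' z :=
    Finset.sum_pos (fun y' _ => hPy y') univ_nonempty
  have hQZ : 0 < ∑ y', ∑ x', q y' x' z :=
    Finset.sum_pos (fun y' _ => hQy y') univ_nonempty
  -- key identity: each term is q l x z times a common positive constant
  have key : ∀ l, (p l x z / (∑ l', p l' x z)) *
      ((∑ x', q l x' z) / (∑ y', ∑ x', q y' x' z)
        / ((∑ x', p l x' z) / (∑ y', ∑ x', p y' x' z))) =
      q l x z * ((∑ y', ∑ x', p y' x' z) / ((∑ l', p l' x z) * (∑ y', ∑ x', q y' x' z))) := by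
    intro l
    have h := hCPS x l z
    have h' : p l x z * (∑ x', q l x' z) = q l x z * (∑ x', p l x' z) := by
      rw [div_eq_div_iff (hPy l).ne' (hQy l).ne'] at h
      linarith
    field_simp [hPx.ne', hQZ.ne', hPZ.ne', (hPy l).ne', (hQy l).ne']
    linear_combination h'
  simp only [key, ← Finset.sum_mul]
  have hc : 0 < (∑ y', ∑ x', p y' x' z) / ((∑ l', p l' x z) * (∑ y', ∑ x', q y' x' z)) :=
    div_pos hPZ (mul_pos hPx hQZ)
  rw [mul_div_mul_right _ _ hc.ne']
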